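/- For every i ∈ {1,…,m−1}, the probability that (ζ'_i)² · Σ_{j=i+1}^{m} (ζ_j)² = (ζ_i)² · Σ_{j=i+1}^{m} (ζ'_j)² is zero. (Key null-set claim in the proof of Lemma 3.2.) -/

import Mathlib

open MeasureTheory ProbabilityTheory

/-- Normalize a vector in `ℝ^m` to unit Euclidean length. -/
noncomputable def unitize (m : ℕ) (x : Fin m → ℝ) : Fin m → ℝ :=
  fun j => x j / Real.sqrt (∑ l, (x l) ^ 2)

/-- The vector `ζ' = a·x̃ + √(1−a²)·(y − ⟨x̃,y⟩·x̃)/‖y − ⟨x̃,y⟩·x̃‖₂`, where `x̃ = x/‖x‖₂`. -/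
noncomputable def zetaPrime (m : ℕ) (a : ℝ) (x y : Fin m → ℝ) : Fin m → ℝ :=
  fun j =>
    a * unitize m x j +
      Real.sqrt (1 - a ^ 2) *
        unitize m (fun l => y l - (∑ l', unitize m x l' * y l') * unitize m x l) j

section Aux
open Polynomial Finset


lemma finite_poly4 (c0 c1 c2 c3 c4 : ℝ) (h4 : c4 ≠ 0) :
    {t : ℝ | c0 + c1*t + c2*t^2 + c3*t^3 + c4*t^4 = 0}.Finite := by
  have hp : (C c0 + C c1 * X + C c2 * X^2 + C c3 * X^3 + C c4 * X^4 : ℝ[X]) ≠ 0 := by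
    intro h
    have h2 : ((C c0 + C c1 * X + C c2 * X^2 + C c3 * X^3 + C c4 * X^4 : ℝ[X])).coeff 4 = 0 := by
      rw [h]; simp
    simp [coeff_add, coeff_C_mul, coeff_X_pow, coeff_C] at h2
    exact h4 h2
  refine (Polynomial.finite_setOf_isRoot hp).subset ?_
  intro t ht
  simp only [Set.mem_setOf_eq, IsRoot, eval_add, eval_mul, eval_pow, eval_C, eval_X] at *
  linarith [ht]

lemma finite_poly2 (c0 c1 c2 : ℝ) (h2 : c2 ≠ 0) :
    {t : ℝ | c0 + c1*t + c2*t^2 = 0}.Finite := by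
  have hp : (C c0 + C c1 * X + C c2 * X^2 : ℝ[X]) ≠ 0 := by
    intro h
    have h' : ((C c0 + C c1 * X + C c2 * X^2 : ℝ[X])).coeff 2 = 0 := by rw [h]; simp
    simp [coeff_add, coeff_C_mul, coeff_X_pow, coeff_C] at h'
    exact h2 h'
  refine (Polynomial.finite_setOf_isRoot hp).subset ?_
  intro t ht
  simp only [Set.mem_setOf_eq, IsRoot, eval_add, eval_mul, eval_pow, eval_C, eval_X] at *
  linarith [ht]

lemma sum_linear_sq {m : ℕ} (s : Finset (Fin m)) (α β : Fin m → ℝ) (t : ℝ) :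
    ∑ j ∈ s, (α j + β j * t)^2
      = (∑ j ∈ s, (α j)^2) + (2 * ∑ j ∈ s, α j * β j) * t + (∑ j ∈ s, (β j)^2) * t^2 := by
  have h : ∀ j ∈ s, (α j + β j * t)^2 = (α j)^2 + (α j * β j) * (2*t) + (β j)^2 * t^2 :=
    fun j _ => by ring
  rw [Finset.sum_congr rfl h, Finset.sum_add_distrib, Finset.sum_add_distrib,
    ← Finset.sum_mul, ← Finset.sum_mul]
  ring

lemma sum_linear {m : ℕ} (s : Finset (Fin m)) (x α β : Fin m → ℝ) (t : ℝ) :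
    ∑ j ∈ s, x j * (α j + β j * t)
      = (∑ j ∈ s, x j * α j) + (∑ j ∈ s, x j * β j) * t := by
  have h : ∀ j ∈ s, x j * (α j + β j * t) = x j * α j + (x j * β j) * t :=
    fun j _ => by ring
  rw [Finset.sum_congr rfl h, Finset.sum_add_distrib, ← Finset.sum_mul]

lemma pi_slice_null {m : ℕ} (ν : Measure ℝ) [IsProbabilityMeasure ν] (k : Fin m)
    {E : Set (Fin m → ℝ)} (hE : MeasurableSet E)
    (h : ∀ x : Fin m → ℝ, ν {t | Function.update x k t ∈ E} = 0) :
    Measure.pi (fun _ : Fin m => ν) E = 0 := by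
  have hf : Measurable (E.indicator (1 : (Fin m → ℝ) → ENNReal)) :=
    measurable_one.indicator hE
  have h0 : Measure.pi (fun _ : Fin m => ν) E
      = ∫⁻ x, E.indicator 1 x ∂(Measure.pi (fun _ : Fin m => ν)) :=
    (lintegral_indicator_one hE).symm
  rw [h0, lintegral_eq_lmarginal_univ (fun _ => (0:ℝ)),
    lmarginal_erase' _ hf (Finset.mem_univ k)]
  have hinner : (fun x : Fin m → ℝ => ∫⁻ t, E.indicator 1 (Function.update x k t) ∂ν)
      = fun _ => 0 := by
    funext x
    have : ∀ t : ℝ, E.indicator (1 : (Fin m → ℝ) → ENNReal) (Function.update x k t)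
        = ({t : ℝ | Function.update x k t ∈ E}).indicator 1 t := by
      intro t
      by_cases ht : Function.update x k t ∈ E <;>
        simp [Set.indicator_apply, ht]
    simp_rw [this]
    rw [lintegral_indicator_one (show MeasurableSet {t : ℝ | Function.update x k t ∈ E} from hE.preimage (measurable_update x))]
    exact h x
  rw [hinner]
  simp [lmarginal]

section Meas
variable {δ : Type*} [MeasurableSpace δ] {m : ℕ}

lemma measurable_unitize_comp {v : δ → Fin m → ℝ} (hv : ∀ l, Measurable fun p => v p l)
    (j : Fin m) : Measurable fun p => unitize m (v p) j := by
  simp only [unitize]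
  exact (hv j).div ((Finset.measurable_sum _ fun l _ => (hv l).pow_const 2).sqrt)

lemma measurable_zetaPrime_comp {a : ℝ} {v w : δ → Fin m → ℝ}
    (hv : ∀ l, Measurable fun p => v p l) (hw : ∀ l, Measurable fun p => w p l)
    (j : Fin m) : Measurable fun p => zetaPrime m a (v p) (w p) j := by
  simp only [zetaPrime]
  have hinner : ∀ l, Measurable fun p =>
      w p l - (∑ l', unitize m (v p) l' * w p l') * unitize m (v p) l := by
    intro l
    exact (hw l).sub
      ((Finset.measurable_sum _ fun l' _ =>
        (measurable_unitize_comp hv l').mul (hw l')).mul (measurable_unitize_comp hv l))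
  exact ((measurable_unitize_comp hv j).const_mul a).add
    ((measurable_unitize_comp hinner j).const_mul _)

end Meas

-- slice of the quartic bad set
lemma bad2_slice (m : ℕ) (a : ℝ) (ha : a ∈ Set.Ioo (-1:ℝ) 1) (i : Fin m) (x : Fin m → ℝ) :
    {t : ℝ | (2*((Function.update x i t) i)^2 - ∑ l, ((Function.update x i t) l)^2)^2
        = a^2*(∑ l, ((Function.update x i t) l)^2)^2}.Finite := by
  classical
  set R : ℝ := ∑ l ∈ Finset.univ.erase i, (x l)^2 with hR_def
  have ha2 : (0:ℝ) < 1 - a^2 := by obtain ⟨h1, h2⟩ := ha; nlinarith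
  have hsum : ∀ t : ℝ, ∑ l, ((Function.update x i t) l)^2 = t^2 + R := by
    intro t
    rw [← Finset.add_sum_erase Finset.univ (fun l => ((Function.update x i t) l)^2)
      (Finset.mem_univ i)]
    simp only [Function.update_self]
    congr 1
    refine Finset.sum_congr rfl fun l hl => ?_
    rw [Function.update_of_ne (Finset.mem_erase.1 hl).1]
  refine (finite_poly4 ((1-a^2)*R^2) 0 (-(2*R*(1+a^2))) 0 (1-a^2) (ne_of_gt ha2)).subset ?_
  intro t ht
  simp only [Set.mem_setOf_eq, hsum, Function.update_self] at ht ⊢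
  linear_combination ht

lemma slice_finite (m : ℕ) (a : ℝ) (ha : a ∈ Set.Ioo (-1:ℝ) 1) (i : Fin m)
    (x y : Fin m → ℝ)
    (hS : 0 < ∑ j ∈ Finset.univ.filter (fun j : Fin m => i < j), (x j)^2)
    (hgood : (2*(x i)^2 - ∑ l, (x l)^2)^2 ≠ a^2*(∑ l, (x l)^2)^2) :
    {t : ℝ | zetaPrime m a x (Function.update y i t) i ^ 2 *
          ∑ j ∈ Finset.univ.filter (fun j : Fin m => i < j), (unitize m x j)^2
        = (unitize m x i)^2 *
          ∑ j ∈ Finset.univ.filter (fun j : Fin m => i < j),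
            (zetaPrime m a x (Function.update y i t) j)^2}.Finite := by
  classical
  set Φ : Finset (Fin m) := Finset.univ.filter (fun j : Fin m => i < j) with hΦ
  set n : ℝ := ∑ l, (x l)^2 with hn_def
  set S : ℝ := ∑ j ∈ Φ, (x j)^2 with hS_def
  have hΦi : ∀ j ∈ Φ, j ≠ i := by
    intro j hj
    simp only [hΦ, mem_filter] at hj
    exact fun h => absurd (h ▸ hj.2) (lt_irrefl i)
  have hn : 0 < n := by
    refine lt_of_lt_of_le hS ?_
    exact Finset.sum_le_sum_of_subset_of_nonneg (Finset.subset_univ _)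
      (fun l _ _ => sq_nonneg _)
  have hRsum : ∑ l ∈ Finset.univ.erase i, (x l)^2 = n - (x i)^2 := by
    have h := Finset.add_sum_erase Finset.univ (fun l => (x l)^2) (Finset.mem_univ i)
    rw [hn_def]
    linarith [h]
  have hR : 0 < n - (x i)^2 := by
    rw [← hRsum]
    refine lt_of_lt_of_le hS (Finset.sum_le_sum_of_subset_of_nonneg ?_
      (fun l _ _ => sq_nonneg _))
    intro j hj
    exact Finset.mem_erase.2 ⟨hΦi j hj, Finset.mem_univ j⟩
  set sn : ℝ := Real.sqrt n with hsn_def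
  have hsn2 : sn^2 = n := Real.sq_sqrt hn.le
  have hsn : 0 < sn := Real.sqrt_pos.2 hn
  set b : ℝ := Real.sqrt (1 - a^2) with hb_def
  have ha2 : 0 < 1 - a^2 := by
    obtain ⟨h1, h2⟩ := ha
    nlinarith
  have hb2 : b^2 = 1 - a^2 := Real.sq_sqrt ha2.le
  have hb : 0 < b := Real.sqrt_pos.2 ha2
  set c' : ℝ := ∑ l ∈ Finset.univ.erase i, x l * y l with hc'_def
  set α : Fin m → ℝ := fun j => if j = i then -(c' * x i) else n * y j - c' * x j with hα_def
  set β : Fin m → ℝ := fun j => if j = i then n - (x i)^2 else -(x i * x j) with hβ_def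
  set q0 : ℝ := ∑ l, (α l)^2 with hq0_def
  set q1 : ℝ := 2 * ∑ l, α l * β l with hq1_def
  set q2 : ℝ := ∑ l, (β l)^2 with hq2_def
  set TA : ℝ := ∑ j ∈ Φ, x j * α j with hTA_def
  set TB : ℝ := ∑ j ∈ Φ, x j * β j with hTB_def
  set WA : ℝ := ∑ j ∈ Φ, (α j)^2 with hWA_def
  set WB : ℝ := 2 * ∑ j ∈ Φ, α j * β j with hWB_def
  set WC : ℝ := ∑ j ∈ Φ, (β j)^2 with hWC_def
  set G0 : ℝ := x i * α i * S - (x i)^2 * TA with hG0_def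
  set G1 : ℝ := x i * β i * S - (x i)^2 * TB with hG1_def
  set H0 : ℝ := (x i)^2 * WA - (α i)^2 * S with hH0_def
  set H1 : ℝ := (x i)^2 * WB - 2 * α i * β i * S with hH1_def
  set H2 : ℝ := (x i)^2 * WC - (β i)^2 * S with hH2_def
  set K : ℝ := (1 - a^2) * n with hK_def
  set cc4 : ℝ := 4*a^2*q2*G1^2 - K*H2^2 with hcc4_def
  set cc3 : ℝ := 4*a^2*(q1*G1^2 + 2*q2*G0*G1) - K*(2*H1*H2) with hcc3_def
  set cc2 : ℝ := 4*a^2*(q0*G1^2 + 2*q1*G0*G1 + q2*G0^2) - K*(H1^2 + 2*H0*H2) with hcc2_def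
  set cc1 : ℝ := 4*a^2*(q1*G0^2 + 2*q0*G0*G1) - K*(2*H0*H1) with hcc1_def
  set cc0 : ℝ := 4*a^2*q0*G0^2 - K*H0^2 with hcc0_def
  have hux : ∀ l, unitize m x l = x l / sn := fun l => rfl
  clear_value Φ n S sn b c' α β q0 q1 q2 TA TB WA WB WC G0 G1 H0 H1 H2 K cc4 cc3 cc2 cc1 cc0
  -- values of β
  have hβi : β i = n - (x i)^2 := by simp [hβ_def]
  have hβΦ : ∀ j ∈ Φ, β j = -(x i * x j) := by
    intro j hj; simp [hβ_def, hΦi j hj]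
  -- q2 value and nonvanishing
  have hq2val : q2 = (n - (x i)^2) * n := by
    rw [hq2_def, ← Finset.add_sum_erase Finset.univ (fun l => (β l)^2) (Finset.mem_univ i)]
    have h1 : ∑ l ∈ Finset.univ.erase i, (β l)^2 = (x i)^2 * ∑ l ∈ Finset.univ.erase i, (x l)^2 := by
      rw [Finset.mul_sum]
      refine Finset.sum_congr rfl fun l hl => ?_
      have hli : l ≠ i := (Finset.mem_erase.1 hl).1
      simp [hβ_def, hli]; ring
    rw [h1, hRsum, hβi]; ring
  have hq2ne : q2 ≠ 0 := by rw [hq2val]; exact mul_ne_zero (ne_of_gt hR) (ne_of_gt hn)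
  -- cc4 nonvanishing
  have hTBval : TB = -(x i * S) := by
    rw [hTB_def, hS_def, Finset.mul_sum, ← Finset.sum_neg_distrib]
    refine Finset.sum_congr rfl fun j hj => ?_
    rw [hβΦ j hj]; ring
  have hWCval : WC = (x i)^2 * S := by
    rw [hWC_def, hS_def, Finset.mul_sum]
    refine Finset.sum_congr rfl fun j hj => ?_
    rw [hβΦ j hj]; ring
  have hG1val : G1 = x i * n * S := by rw [hG1_def, hβi, hTBval]; ring
  have hH2val : H2 = (x i)^4 * S - (n - (x i)^2)^2 * S := by
    rw [hH2_def, hWCval, hβi]; ring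
  have hcc4val : cc4 = n^3 * S^2 * (a^2*n^2 - (2*(x i)^2 - n)^2) := by
    rw [hcc4_def, hq2val, hG1val, hH2val, hK_def]; ring
  have hcc4 : cc4 ≠ 0 := by
    rw [hcc4val]
    refine mul_ne_zero (mul_ne_zero (by positivity) (by positivity)) ?_
    exact sub_ne_zero_of_ne (Ne.symm hgood)
  -- main inclusion
  refine Set.Finite.subset ((finite_poly2 q0 q1 q2 hq2ne).union
    (finite_poly4 cc0 cc1 cc2 cc3 cc4 hcc4)) ?_
  intro t ht
  simp only [Set.mem_setOf_eq] at ht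
  by_cases hQ0 : q0 + q1*t + q2*t^2 = 0
  · exact Or.inl hQ0
  right
  -- setup
  set Y' : Fin m → ℝ := Function.update y i t with hY'_def
  set vv : Fin m → ℝ := fun j => α j + β j * t with hvv_def
  clear_value Y' vv
  have hsum_xY : ∑ l, x l * Y' l = c' + x i * t := by
    rw [← Finset.add_sum_erase Finset.univ (fun l => x l * Y' l) (Finset.mem_univ i)]
    have h1 : ∑ l ∈ Finset.univ.erase i, x l * Y' l = c' := by
      rw [hc'_def]
      refine Finset.sum_congr rfl fun l hl => ?_
      rw [hY'_def, Function.update_of_ne (Finset.mem_erase.1 hl).1]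
    rw [h1, hY'_def, Function.update_self]; ring
  have hvv' : ∀ j, Y' j - (∑ l', unitize m x l' * Y' l') * unitize m x j = vv j / n := by
    intro j
    have h1 : ∑ l', unitize m x l' * Y' l' = (c' + x i * t) / sn := by
      rw [← hsum_xY, Finset.sum_div]
      exact Finset.sum_congr rfl fun l _ => by rw [hux]; ring
    rw [h1, hux]
    have hsnsn : sn * sn = n := by rw [← hsn2]; ring
    rcases eq_or_ne j i with rfl | hji
    · rw [hY'_def, Function.update_self, hvv_def]
      simp only [hα_def, hβ_def, if_pos rfl]
      rw [div_mul_div_comm, hsnsn, eq_div_iff (ne_of_gt hn), sub_mul,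
        div_mul_cancel₀ _ (ne_of_gt hn)]
      ring
    · rw [hY'_def, Function.update_of_ne hji, hvv_def]
      simp only [hα_def, hβ_def, if_neg hji]
      rw [div_mul_div_comm, hsnsn, eq_div_iff (ne_of_gt hn), sub_mul,
        div_mul_cancel₀ _ (ne_of_gt hn)]
      ring

  have hwfun : (fun l => Y' l - (∑ l', unitize m x l' * Y' l') * unitize m x l)
      = fun l => vv l / n := funext hvv'
  have hQsum : ∑ l, (vv l)^2 = q0 + q1*t + q2*t^2 := by
    simp only [hvv_def]
    rw [hq0_def, hq1_def, hq2_def]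
    exact sum_linear_sq _ _ _ _
  set Q : ℝ := q0 + q1*t + q2*t^2 with hQ_def
  have hQdiv : ∑ l, (vv l / n)^2 = Q / n^2 := by
    simp only [div_pow]
    rw [← Finset.sum_div, hQsum]
  have hQnn : 0 ≤ Q := by
    have h1 : 0 ≤ Q / n^2 := by
      rw [← hQdiv]; exact Finset.sum_nonneg fun l _ => sq_nonneg _
    have h2 := mul_nonneg h1 (sq_nonneg n)
    rwa [div_mul_cancel₀ _ (pow_ne_zero 2 (ne_of_gt hn))] at h2
  have hQpos : 0 < Q := lt_of_le_of_ne hQnn (Ne.symm hQ0)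
  set sQ : ℝ := Real.sqrt Q with hsQ_def
  have hsQ2 : sQ^2 = Q := Real.sq_sqrt hQnn
  have hsQ : 0 < sQ := Real.sqrt_pos.2 hQpos
  have e1 : ∀ j, unitize m (fun l => vv l / n) j = vv j / sQ := by
    intro j
    simp only [unitize]
    rw [hQdiv, Real.sqrt_div hQnn, Real.sqrt_sq hn.le, ← hsQ_def]
    show vv j / n / (sQ / n) = vv j / sQ
    rw [div_div_div_eq, mul_comm n sQ, ← div_div_div_eq, div_self (ne_of_gt hn), div_one]
  have hzeta : ∀ j, zetaPrime m a x Y' j = a * (x j / sn) + b * (vv j / sQ) := by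
    intro j
    simp only [zetaPrime]
    rw [hwfun, e1 j, hux, ← hb_def]
  have hΦu : ∑ j ∈ Φ, (unitize m x j)^2 = S / n := by
    rw [hS_def, Finset.sum_div]
    refine Finset.sum_congr rfl fun j _ => ?_
    rw [hux, div_pow, hsn2]
  have hzi2 : (unitize m x i)^2 = (x i)^2 / n := by rw [hux, div_pow, hsn2]
  rw [hΦu, hzi2] at ht
  simp only [hzeta] at ht
  clear_value sQ
  set T : ℝ := ∑ j ∈ Φ, x j * vv j with hT_def
  set Wq : ℝ := ∑ j ∈ Φ, (vv j)^2 with hWq_def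
  have hterm : ∀ z v : ℝ, (a*z*sQ + b*v*sn)^2 = (n*Q) * (a*(z/sn) + b*(v/sQ))^2 := by
    intro z v
    rw [← hsn2, ← hsQ2]
    field_simp
  have hsum1 : ∑ j ∈ Φ, (a*(x j)*sQ + b*(vv j)*sn)^2
      = (n*Q) * ∑ j ∈ Φ, (a*(x j/sn) + b*(vv j/sQ))^2 := by
    rw [Finset.mul_sum]
    exact Finset.sum_congr rfl fun j _ => hterm _ _
  have key : (a*(x i)*sQ + b*(vv i)*sn)^2 * S
      = (x i)^2 * ∑ j ∈ Φ, (a*(x j)*sQ + b*(vv j)*sn)^2 := by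
    calc (a*(x i)*sQ + b*(vv i)*sn)^2 * S
        = (n^2*Q) * ((a*(x i/sn) + b*(vv i/sQ))^2 * (S/n)) := by
          rw [hterm]; field_simp
      _ = (n^2*Q) * ((x i)^2/n * ∑ j ∈ Φ, (a*(x j/sn) + b*(vv j/sQ))^2) := by rw [ht]
      _ = (x i)^2 * ∑ j ∈ Φ, (a*(x j)*sQ + b*(vv j)*sn)^2 := by
          rw [hsum1]; field_simp; congr 1; exact Finset.sum_congr rfl fun j _ => by ring
  have hexp : ∀ z v : ℝ, (a*z*sQ + b*v*sn)^2
      = a^2*Q*z^2 + 2*a*b*sn*sQ*(z*v) + b^2*n*v^2 := by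
    intro z v
    rw [← hsn2, ← hsQ2]
    ring
  have hsum2 : ∑ j ∈ Φ, (a*(x j)*sQ + b*(vv j)*sn)^2
      = a^2*Q*S + 2*a*b*sn*sQ*T + b^2*n*Wq := by
    rw [Finset.sum_congr rfl (fun j _ => hexp (x j) (vv j)), Finset.sum_add_distrib,
      Finset.sum_add_distrib, ← Finset.mul_sum, ← Finset.mul_sum, ← Finset.mul_sum,
      ← hS_def, ← hT_def, ← hWq_def]
  rw [hexp, hsum2] at key
  have h3 : 2*a*b*sn*sQ*(x i * vv i * S - (x i)^2*T)
      = b^2*n*((x i)^2*Wq - (vv i)^2*S) := by linear_combination key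
  set G : ℝ := x i * vv i * S - (x i)^2*T with hG_def
  set Hh : ℝ := (x i)^2*Wq - (vv i)^2*S with hHh_def
  have h4 : (b^2*n)*(4*a^2*Q*G^2) = (b^2*n)*((1-a^2)*n*Hh^2) := by
    linear_combination (2*a*b*sn*sQ*G + b^2*n*Hh)*h3 - 4*a^2*b^2*G^2*sQ^2*hsn2
      - 4*a^2*b^2*G^2*n*hsQ2 + b^2*n^2*Hh^2*hb2
  have h5 : 4*a^2*Q*G^2 = (1-a^2)*n*Hh^2 :=
    mul_left_cancel₀ (ne_of_gt (mul_pos (pow_pos hb 2) hn)) h4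
  have hvvi : vv i = α i + β i * t := by rw [hvv_def]
  have hTlin : T = TA + TB*t := by
    rw [hT_def]
    simp only [hvv_def]
    rw [hTA_def, hTB_def]
    exact sum_linear _ _ _ _ _
  have hWlin : Wq = WA + WB*t + WC*t^2 := by
    rw [hWq_def]
    simp only [hvv_def]
    rw [hWA_def, hWB_def, hWC_def]
    exact sum_linear_sq _ _ _ _
  have hGt : G = G0 + G1*t := by
    rw [hG_def, hvvi, hTlin, hG0_def, hG1_def]; ring
  have hHt : Hh = H0 + H1*t + H2*t^2 := by
    rw [hHh_def, hvvi, hWlin, hH0_def, hH1_def, hH2_def]; ring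
  show cc0 + cc1*t + cc2*t^2 + cc3*t^3 + cc4*t^4 = 0
  have hfinal : cc0 + cc1*t + cc2*t^2 + cc3*t^3 + cc4*t^4
      = 4*a^2*Q*G^2 - (1-a^2)*n*Hh^2 := by
    rw [hQ_def, hGt, hHt, hcc0_def, hcc1_def, hcc2_def, hcc3_def, hcc4_def, hK_def]
    ring
  rw [hfinal]
  exact sub_eq_zero.mpr h5

end Aux

/-- Key null-set claim in the proof of Lemma 3.2: if `x, y` are independent standard Gaussian
vectors in `ℝ^m`, `ζ = x̃ = x/‖x‖₂` and
`ζ' = a·x̃ + √(1−a²)·(y − ⟨x̃,y⟩·x̃)/‖y − ⟨x̃,y⟩·x̃‖₂`, then for every `i ∈ {1,…,m−1}` the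
probability that `(ζ'_i)²·Σ_{j>i}(ζ_j)² = (ζ_i)²·Σ_{j>i}(ζ'_j)²` is zero. -/
theorem gaussian_generic_coordinates
    {Ω : Type*} [MeasurableSpace Ω] (P : Measure Ω) [IsProbabilityMeasure P]
    (m : ℕ) (hm : 2 ≤ m) (a : ℝ) (ha : a ∈ Set.Ioo (-1 : ℝ) 1)
    (X Y : Ω → Fin m → ℝ)
    (hXmeas : Measurable X) (hYmeas : Measurable Y)
    (hX : Measure.map X P = Measure.pi fun _ : Fin m => gaussianReal 0 1)
    (hY : Measure.map Y P = Measure.pi fun _ : Fin m => gaussianReal 0 1)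
    (hindep : IndepFun X Y P) :
    ∀ i : Fin m, (i : ℕ) + 1 < m →
      P {ω | (zetaPrime m a (X ω) (Y ω) i) ^ 2 *
              ∑ j ∈ Finset.univ.filter (fun j : Fin m => i < j), (unitize m (X ω) j) ^ 2 =
            (unitize m (X ω) i) ^ 2 *
              ∑ j ∈ Finset.univ.filter (fun j : Fin m => i < j),
                (zetaPrime m a (X ω) (Y ω) j) ^ 2} = 0 := by
  classical
  intro i him
  set ν : Measure ℝ := gaussianReal 0 1 with hν_def
  haveI : NullSingletonClass ν := ⟨fun t => (gaussianReal_absolutelyContinuous 0 one_ne_zero)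
    (measure_singleton t)⟩
  set μ : Measure (Fin m → ℝ) := Measure.pi (fun _ : Fin m => ν) with hμ_def
  set E : Set ((Fin m → ℝ) × (Fin m → ℝ)) :=
    {p | (zetaPrime m a p.1 p.2 i) ^ 2 *
          ∑ j ∈ Finset.univ.filter (fun j : Fin m => i < j), (unitize m p.1 j) ^ 2 =
        (unitize m p.1 i) ^ 2 *
          ∑ j ∈ Finset.univ.filter (fun j : Fin m => i < j),
            (zetaPrime m a p.1 p.2 j) ^ 2} with hE_def
  have hv1 : ∀ l, Measurable fun p : (Fin m → ℝ) × (Fin m → ℝ) => p.1 l :=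
    fun l => (measurable_pi_apply l).comp measurable_fst
  have hv2 : ∀ l, Measurable fun p : (Fin m → ℝ) × (Fin m → ℝ) => p.2 l :=
    fun l => (measurable_pi_apply l).comp measurable_snd
  have hE : MeasurableSet E := by
    refine measurableSet_eq_fun ?_ ?_
    · exact ((measurable_zetaPrime_comp hv1 hv2 i).pow_const 2).mul
        (Finset.measurable_sum _ fun j _ => (measurable_unitize_comp hv1 j).pow_const 2)
    · exact ((measurable_unitize_comp hv1 i).pow_const 2).mul
        (Finset.measurable_sum _ fun j _ => (measurable_zetaPrime_comp hv1 hv2 j).pow_const 2)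
  -- rewrite as product measure of E
  have hjoint : P.map (fun ω => (X ω, Y ω)) = μ.prod μ := by
    have h := (indepFun_iff_map_prod_eq_prod_map_map hXmeas.aemeasurable
      hYmeas.aemeasurable).mp hindep
    rw [hX, hY] at h
    exact h
  have hpre : {ω | (zetaPrime m a (X ω) (Y ω) i) ^ 2 *
              ∑ j ∈ Finset.univ.filter (fun j : Fin m => i < j), (unitize m (X ω) j) ^ 2 =
            (unitize m (X ω) i) ^ 2 *
              ∑ j ∈ Finset.univ.filter (fun j : Fin m => i < j),
                (zetaPrime m a (X ω) (Y ω) j) ^ 2}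
      = (fun ω => (X ω, Y ω)) ⁻¹' E := rfl
  rw [hpre, ← Measure.map_apply (hXmeas.prodMk hYmeas) hE, hjoint]
  -- bad set of x
  set k : Fin m := ⟨(i:ℕ)+1, him⟩ with hk_def
  have hik : i < k := by rw [hk_def]; exact Fin.lt_def.2 (by simp)
  set Z1 : Set (Fin m → ℝ) := {x | x k = 0} with hZ1_def
  set Z2 : Set (Fin m → ℝ) :=
    {x | (2*(x i)^2 - ∑ l, (x l)^2)^2 = a^2*(∑ l, (x l)^2)^2} with hZ2_def
  have hZ1meas : MeasurableSet Z1 := (measurable_pi_apply k) (measurableSet_singleton 0)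
  have hZ2meas : MeasurableSet Z2 := by
    refine measurableSet_eq_fun ?_ ?_
    · exact (((measurable_pi_apply i).pow_const 2).const_mul 2 |>.sub
        (Finset.measurable_sum _ fun l _ => (measurable_pi_apply l).pow_const 2)).pow_const 2
    · exact ((Finset.measurable_sum _ fun l _ =>
        (measurable_pi_apply l).pow_const 2).pow_const 2).const_mul _
  have hZ1 : μ Z1 = 0 := by
    refine pi_slice_null ν k hZ1meas fun x => ?_
    have : {t : ℝ | Function.update x k t ∈ Z1} ⊆ {(0:ℝ)} := by
      intro t ht
      simp only [hZ1_def, Set.mem_setOf_eq, Function.update_self] at ht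
      simp [ht]
    exact measure_mono_null this (measure_singleton 0)
  have hZ2 : μ Z2 = 0 := by
    refine pi_slice_null ν i hZ2meas fun x => ?_
    exact Set.Finite.measure_zero (bad2_slice m a ha i x) ν
  -- conclude with Fubini
  rw [Measure.measure_prod_null hE]
  have hae : ∀ᵐ x ∂μ, x ∉ Z1 ∪ Z2 :=
    measure_eq_zero_iff_ae_notMem.mp (measure_union_null hZ1 hZ2)
  filter_upwards [hae] with x hx
  simp only [Set.mem_union, not_or] at hx
  obtain ⟨hx1, hx2⟩ := hx
  -- x is good : S > 0
  have hSnn : (0:ℝ) ≤ ∑ j ∈ Finset.univ.filter (fun j : Fin m => i < j), (x j)^2 :=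
    Finset.sum_nonneg fun j _ => sq_nonneg _
  have hSpos : 0 < ∑ j ∈ Finset.univ.filter (fun j : Fin m => i < j), (x j)^2 := by
    rcases lt_or_eq_of_le hSnn with h | h
    · exact h
    exfalso
    apply hx1
    have hk0 : (x k)^2 = 0 := by
      have := (Finset.sum_eq_zero_iff_of_nonneg fun j _ => sq_nonneg (x j)).1 h.symm k
        (Finset.mem_filter.2 ⟨Finset.mem_univ k, hik⟩)
      exact this
    simpa [hZ1_def] using pow_eq_zero_iff (n := 2) (by norm_num) |>.1 hk0
  have hgood : (2*(x i)^2 - ∑ l, (x l)^2)^2 ≠ a^2*(∑ l, (x l)^2)^2 := hx2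
  -- section is null
  have hsec : MeasurableSet (Prod.mk x ⁻¹' E) := measurable_prodMk_left hE
  refine pi_slice_null ν i hsec fun y => ?_
  refine Set.Finite.measure_zero ?_ ν
  exact (slice_finite m a ha i x y hSpos hgood).subset fun t ht => ht
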